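/- arXiv:1409.2427 — 2 statements merged into one kernel-verified Lean document; each statement's English description precedes it below -/
import Mathlib

section
/- In ℂ⁵ with the ℂ-bilinear dot product, let E₁ = (1,i,0,0,0), E₂ = (0,0,1,i,0), e₅ = (0,0,0,0,1), and define the polynomial map Φ(z) = (1 − 20z³ − 80z⁶)E₁ + (z⁸/2)E̅₁ − (8z³ + 20z⁶ − 10z⁹)E₂ + z⁵E̅₂ + √30(z⁴ + 2z⁷)e₅, where E̅₁ = (1,−i,0,0,0), E̅₂ = (0,0,1,−i,0). Then Φ(z)·Φ(z) = 0 for all z ∈ ℂ. -/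
open Finset Complex

/-- The ℂ-bilinear dot product on ℂⁿ. -/
noncomputable def dotC {n : ℕ} (a b : Fin n → ℂ) : ℂ := ∑ i, a i * b i

/-- The vector polynomial Φ of Example 3 (equation (8.17)) is isotropic:
Φ(z)·Φ(z) = 0 for all z ∈ ℂ. -/
theorem stmt_13 :
    let E₁ : Fin 5 → ℂ := ![1, I, 0, 0, 0]
    let E₂ : Fin 5 → ℂ := ![0, 0, 1, I, 0]
    let E₁b : Fin 5 → ℂ := ![1, -I, 0, 0, 0]
    let E₂b : Fin 5 → ℂ := ![0, 0, 1, -I, 0]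
    let e₅ : Fin 5 → ℂ := ![0, 0, 0, 0, 1]
    let Φ : ℂ → Fin 5 → ℂ := fun z =>
      (1 - 20 * z ^ 3 - 80 * z ^ 6) • E₁ + (z ^ 8 / 2) • E₁b
        - (8 * z ^ 3 + 20 * z ^ 6 - 10 * z ^ 9) • E₂ + (z ^ 5) • E₂b
        + ((Real.sqrt 30 : ℂ) * (z ^ 4 + 2 * z ^ 7)) • e₅
    ∀ z : ℂ, dotC (Φ z) (Φ z) = 0 := by
  intro E₁ E₂ E₁b E₂b e₅ Φ z
  have hs : (Real.sqrt 30 : ℂ) ^ 2 = 30 := by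
    norm_cast
    rw [Real.sq_sqrt] <;> norm_num
  have hI : (I : ℂ) ^ 2 = -1 := I_sq
  simp only [dotC, Φ, E₁, E₂, E₁b, E₂b, e₅, Fin.sum_univ_five, Pi.add_apply,
    Pi.sub_apply, Pi.smul_apply, Matrix.cons_val_zero, Matrix.cons_val_one,
    Matrix.head_cons, Matrix.cons_val_two, Matrix.tail_cons, Matrix.cons_val_three,
    Matrix.cons_val_four, smul_eq_mul]
  linear_combination (z ^ 8 + 4 * z ^ 11 + 4 * z ^ 14) * hs +
    (1 - 40 * z ^ 3 + 304 * z ^ 6 + 15 * z ^ 8 + 3520 * z ^ 9 + z ^ 10 + 60 * z ^ 11 +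
      6640 * z ^ 12 + 60 * z ^ 14 - 400 * z ^ 15 + z ^ 16 / 4 + 100 * z ^ 18) * hI
end

section
/- Let x̂ : ℂ → ℝ⁶ be defined by x̂ = (1/(1 + r⁴/4 + 4r⁶/9)) · ( (1 + r⁶/9)(i/2)(z − z̄), (1 + r⁶/9)(−1/2)(z + z̄), (r²/4 + r⁴/3)·i(z̄ − z), (r²/4 + r⁴/3)(z̄ + z), (1 − r⁴/12)(i/2)(z² − z̄²), (1 − r⁴/12)(−1/2)(z² + z̄²) ), with r² = |z|², and let x be the map of Example 1. Then x̂ coincides with the pedal surface of x: x̂ = x − ((x·x_z̄)/(x_z·x_z̄))·x_z − ((x·x_z)/(x_z·x_z̄))·x_z̄ for all z ∈ ℂ∖{0}. -/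
open Finset Complex

/-- The Wirtinger derivative ∂/∂z. -/
noncomputable def wderivZ {E : Type*} [NormedAddCommGroup E] [NormedSpace ℂ E]
    (f : ℂ → E) (z : ℂ) : E :=
  (2 : ℂ)⁻¹ • (fderiv ℝ f z 1 - Complex.I • fderiv ℝ f z Complex.I)

/-- The Wirtinger derivative ∂/∂z̄. -/
noncomputable def wderivZbar {E : Type*} [NormedAddCommGroup E] [NormedSpace ℂ E]
    (f : ℂ → E) (z : ℂ) : E :=
  (2 : ℂ)⁻¹ • (fderiv ℝ f z 1 + Complex.I • fderiv ℝ f z Complex.I)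

/-- The totally isotropic minimal surface of Example 1 in ℝ⁶ ⊂ ℂ⁶. -/
noncomputable def exMin (z : ℂ) : Fin 6 → ℂ :=
  ![ (I / 4) * (z - (starRingEnd ℂ) z),
     -(1 / 4) * (z + (starRingEnd ℂ) z),
     -(I / 2) * (1 / (starRingEnd ℂ) z - 1 / z),
     (1 / 2) * (1 / (starRingEnd ℂ) z + 1 / z),
     (I / 6) * (z ^ 2 - (starRingEnd ℂ z) ^ 2),
     -(1 / 6) * (z ^ 2 + (starRingEnd ℂ z) ^ 2) ]

lemma hfd {f : ℂ → ℂ} {f' z : ℂ} (hf : HasDerivAt f f' z) :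
    HasFDerivAt (fun w => f w + (starRingEnd ℂ) (f w))
      ((((ContinuousLinearMap.smulRight (1 : ℂ →L[ℂ] ℂ) f').restrictScalars ℝ)) +
        (Complex.conjCLE.toContinuousLinearMap.comp
          ((ContinuousLinearMap.smulRight (1 : ℂ →L[ℂ] ℂ) f').restrictScalars ℝ))) z := by
  exact (hf.hasFDerivAt.restrictScalars ℝ).add
    ((Complex.conjCLE.toContinuousLinearMap.hasFDerivAt).comp z (hf.hasFDerivAt.restrictScalars ℝ))

lemma wderivZ_addConj {f : ℂ → ℂ} {f' z : ℂ} (hf : HasDerivAt f f' z) :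
    wderivZ (fun w => f w + (starRingEnd ℂ) (f w)) z = f' := by
  rw [wderivZ, (hfd hf).fderiv]
  simp [ContinuousLinearMap.smulRight_apply, Complex.conjCLE_apply, smul_eq_mul, map_mul,
    Complex.conj_I]
  ring_nf
  simp [Complex.I_sq]
  ring

lemma wderivZbar_addConj {f : ℂ → ℂ} {f' z : ℂ} (hf : HasDerivAt f f' z) :
    wderivZbar (fun w => f w + (starRingEnd ℂ) (f w)) z = (starRingEnd ℂ) f' := by
  rw [wderivZbar, (hfd hf).fderiv]
  simp [ContinuousLinearMap.smulRight_apply, Complex.conjCLE_apply, smul_eq_mul, map_mul,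
    Complex.conj_I]
  ring_nf
  simp [Complex.I_sq]
  ring

lemma wderivZ_pi {n : ℕ} (F : Fin n → ℂ → ℂ) (z : ℂ)
    (h : ∀ i, DifferentiableAt ℝ (F i) z) :
    wderivZ (fun w i => F i w) z = fun i => wderivZ (F i) z := by
  funext i
  rw [wderivZ, wderivZ, fderiv_pi h]
  simp

lemma wderivZbar_pi {n : ℕ} (F : Fin n → ℂ → ℂ) (z : ℂ)
    (h : ∀ i, DifferentiableAt ℝ (F i) z) :
    wderivZbar (fun w i => F i w) z = fun i => wderivZbar (F i) z := by
  funext i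
  rw [wderivZbar, wderivZbar, fderiv_pi h]
  simp

noncomputable def phi : Fin 6 → ℂ → ℂ :=
  ![ fun z => (I / 4) * z,
     fun z => -(1 / 4) * z,
     fun z => (I / 2) * z⁻¹,
     fun z => (1 / 2) * z⁻¹,
     fun z => (I / 6) * z ^ 2,
     fun z => -(1 / 6) * z ^ 2 ]

noncomputable def phiD (z : ℂ) : Fin 6 → ℂ :=
  ![ I / 4, -(1 / 4), -(I / 2) * (z ^ 2)⁻¹, -(1 / 2) * (z ^ 2)⁻¹,
     I / 3 * z, -(1 / 3) * z ]

lemma exMin_eq : exMin = fun z i => phi i z + (starRingEnd ℂ) (phi i z) := by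
  funext z
  rw [funext_iff]
  simp only [exMin, phi, Fin.forall_fin_succ, Matrix.cons_val_zero, Matrix.cons_val_succ,
    IsEmpty.forall_iff, and_true]
  refine ⟨?_, ?_, ?_, ?_, ?_, ?_⟩ <;>
    simp [map_mul, map_inv₀, Complex.conj_I, one_div, map_ofNat] <;> ring

lemma phi_hasDerivAt (z : ℂ) (hz : z ≠ 0) : ∀ i, HasDerivAt (phi i) (phiD z i) z := by
  simp only [phi, phiD, Fin.forall_fin_succ, Matrix.cons_val_zero, Matrix.cons_val_succ,
    IsEmpty.forall_iff, and_true]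
  refine ⟨?_, ?_, ?_, ?_, ?_, ?_⟩
  · simpa using (hasDerivAt_id z).const_mul (I / 4)
  · simpa using (hasDerivAt_id z).const_mul (-(1 / 4) : ℂ)
  · have := (hasDerivAt_inv hz).const_mul (I / 2)
    exact this.congr_deriv (by ring)
  · have := (hasDerivAt_inv hz).const_mul ((1 : ℂ) / 2)
    exact this.congr_deriv (by ring)
  · have := (hasDerivAt_pow 2 z).const_mul (I / 6)
    exact this.congr_deriv (by push_cast; ring)
  · have := (hasDerivAt_pow 2 z).const_mul (-(1 / 6) : ℂ)
    exact this.congr_deriv (by push_cast; ring)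

lemma exMin_wZ (z : ℂ) (hz : z ≠ 0) : wderivZ exMin z = phiD z := by
  have hdiff : ∀ i : Fin 6, DifferentiableAt ℝ (fun w => phi i w + (starRingEnd ℂ) (phi i w)) z :=
    fun i => (((phi_hasDerivAt z hz i).differentiableAt).restrictScalars ℝ).add
      (Complex.conjCLE.toContinuousLinearMap.differentiableAt.comp z
        (((phi_hasDerivAt z hz i).differentiableAt).restrictScalars ℝ))
  rw [exMin_eq, wderivZ_pi (fun i w => phi i w + (starRingEnd ℂ) (phi i w)) z hdiff]
  funext i
  exact wderivZ_addConj (phi_hasDerivAt z hz i)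

lemma exMin_wZbar (z : ℂ) (hz : z ≠ 0) :
    wderivZbar exMin z = fun i => (starRingEnd ℂ) (phiD z i) := by
  have hdiff : ∀ i : Fin 6, DifferentiableAt ℝ (fun w => phi i w + (starRingEnd ℂ) (phi i w)) z :=
    fun i => (((phi_hasDerivAt z hz i).differentiableAt).restrictScalars ℝ).add
      (Complex.conjCLE.toContinuousLinearMap.differentiableAt.comp z
        (((phi_hasDerivAt z hz i).differentiableAt).restrictScalars ℝ))
  rw [exMin_eq, wderivZbar_pi (fun i w => phi i w + (starRingEnd ℂ) (phi i w)) z hdiff]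
  funext i
  exact wderivZbar_addConj (phi_hasDerivAt z hz i)

@[simp] lemma cons_val_five {α : Type*} (a b c d e f : α) :
    ![a, b, c, d, e, f] (5 : Fin 6) = f := rfl

set_option maxHeartbeats 1600000 in
/-- The explicit surface x̂ of Example 1 is the pedal surface of x with pedal
point the origin: x̂ = x − ((x·x_z̄)/(x_z·x_z̄))x_z − ((x·x_z)/(x_z·x_z̄))x_z̄. -/
theorem stmt_17 :
    let xhat : ℂ → Fin 6 → ℂ := fun z =>
      (1 / (1 + (normSq z : ℂ) ^ 2 / 4 + 4 * (normSq z : ℂ) ^ 3 / 9)) •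
      ![ (1 + (normSq z : ℂ) ^ 3 / 9) * (I / 2) * (z - (starRingEnd ℂ) z),
         (1 + (normSq z : ℂ) ^ 3 / 9) * (-1 / 2) * (z + (starRingEnd ℂ) z),
         ((normSq z : ℂ) / 4 + (normSq z : ℂ) ^ 2 / 3) * I * ((starRingEnd ℂ) z - z),
         ((normSq z : ℂ) / 4 + (normSq z : ℂ) ^ 2 / 3) * ((starRingEnd ℂ) z + z),
         (1 - (normSq z : ℂ) ^ 2 / 12) * (I / 2) * (z ^ 2 - (starRingEnd ℂ z) ^ 2),
         (1 - (normSq z : ℂ) ^ 2 / 12) * (-1 / 2) * (z ^ 2 + (starRingEnd ℂ z) ^ 2) ]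
    ∀ z : ℂ, z ≠ 0 →
      xhat z = exMin z
        - (dotC (exMin z) (wderivZbar exMin z)
            / dotC (wderivZ exMin z) (wderivZbar exMin z)) • wderivZ exMin z
        - (dotC (exMin z) (wderivZ exMin z)
            / dotC (wderivZ exMin z) (wderivZbar exMin z)) • wderivZbar exMin z := by
  intro xhat z hz
  have hw : (starRingEnd ℂ) z ≠ 0 := by simpa using hz
  have hq : ((normSq z : ℝ) : ℂ) = z * (starRingEnd ℂ) z := (Complex.mul_conj z).symm
  have hNR : (0 : ℝ) < 36 + 9 * normSq z ^ 2 + 16 * normSq z ^ 3 := by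
    nlinarith [normSq_nonneg z, sq_nonneg (normSq z), sq_nonneg (normSq z * normSq z)]
  have hN : (36 : ℂ) + 9 * (z * (starRingEnd ℂ) z) ^ 2 + 16 * (z * (starRingEnd ℂ) z) ^ 3 ≠ 0 := by
    rw [← hq]
    norm_cast
    exact ne_of_gt hNR
  have h1 : (1 : ℂ) + (z * (starRingEnd ℂ) z) ^ 2 / 4 + 4 * (z * (starRingEnd ℂ) z) ^ 3 / 9 ≠ 0 := by
    intro h
    exact hN (by linear_combination 36 * h)
  rw [exMin_wZ z hz, exMin_wZbar z hz]
  have hD : dotC (phiD z) (fun i => (starRingEnd ℂ) (phiD z i)) =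
      ((36 : ℂ) + 9 * (z * (starRingEnd ℂ) z) ^ 2 + 16 * (z * (starRingEnd ℂ) z) ^ 3)
        / (72 * (z * (starRingEnd ℂ) z) ^ 2) := by
    simp only [dotC, Fin.sum_univ_six, phiD, Matrix.cons_val_zero, Matrix.cons_val_one,
      Matrix.head_cons, Matrix.cons_val_two, Matrix.tail_cons, Matrix.cons_val_three,
      Matrix.cons_val_four, cons_val_five, map_mul, map_inv₀, map_pow, map_div₀,
      Complex.conj_I, map_ofNat, map_one, map_neg]
    field_simp
    ring_nf
    simp only [Complex.I_sq]
    ring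
  have hA : dotC (exMin z) (fun i => (starRingEnd ℂ) (phiD z i)) =
      (9 * (z * (starRingEnd ℂ) z) ^ 2 - 36 + 8 * (z * (starRingEnd ℂ) z) ^ 3)
        / (72 * (z * ((starRingEnd ℂ) z) ^ 2)) := by
    simp only [dotC, Fin.sum_univ_six, exMin, phiD, Matrix.cons_val_zero, Matrix.cons_val_one,
      Matrix.head_cons, Matrix.cons_val_two, Matrix.tail_cons, Matrix.cons_val_three,
      Matrix.cons_val_four, cons_val_five, map_mul, map_inv₀, map_pow, map_div₀,
      Complex.conj_I, map_ofNat, map_one, map_neg]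
    field_simp
    ring_nf
    simp only [Complex.I_sq]
    ring
  have hB : dotC (exMin z) (phiD z) =
      (9 * (z * (starRingEnd ℂ) z) ^ 2 - 36 + 8 * (z * (starRingEnd ℂ) z) ^ 3)
        / (72 * ((starRingEnd ℂ) z * z ^ 2)) := by
    simp only [dotC, Fin.sum_univ_six, exMin, phiD, Matrix.cons_val_zero, Matrix.cons_val_one,
      Matrix.head_cons, Matrix.cons_val_two, Matrix.tail_cons, Matrix.cons_val_three,
      Matrix.cons_val_four, cons_val_five, map_mul, map_inv₀, map_pow, map_div₀,
      Complex.conj_I, map_ofNat, map_one, map_neg]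
    field_simp
    ring_nf
    simp only [Complex.I_sq]
    ring
  rw [hA, hB, hD]
  simp only [xhat]
  rw [funext_iff]
  simp only [hq, Pi.sub_apply, Pi.smul_apply, smul_eq_mul, exMin, phiD,
    Matrix.cons_val_zero, Matrix.cons_val_one, Matrix.head_cons, Matrix.cons_val_two,
    Matrix.tail_cons, Matrix.cons_val_three, Matrix.cons_val_four, cons_val_five,
    map_mul, map_inv₀, map_pow, map_div₀, Complex.conj_I, map_ofNat, map_one, map_neg,
    Fin.forall_fin_succ, IsEmpty.forall_iff, and_true, Matrix.cons_val_succ]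
  refine ⟨?_, ?_, ?_, ?_, ?_, ?_⟩ <;>
  · rw [show (1 : ℂ) + (z * (starRingEnd ℂ) z) ^ 2 / 4 + 4 * (z * (starRingEnd ℂ) z) ^ 3 / 9
        = ((36 : ℂ) + 9 * (z * (starRingEnd ℂ) z) ^ 2 + 16 * (z * (starRingEnd ℂ) z) ^ 3) / 36
        from by ring]
    field_simp [hN, show (36 : ℂ) + 9 * z ^ 2 * (starRingEnd ℂ) z ^ 2 + z ^ 3 * (starRingEnd ℂ) z ^ 3 * 16 ≠ 0
      from by convert hN using 1; ring]
    try simp only [map_ofNat, Complex.conj_I, map_one, map_neg]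
    first
      | ring
      | (ring_nf; simp only [Complex.I_sq]; ring)
      | (ring_nf; simp only [Complex.I_sq];
         field_simp [hN]; ring)
end
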